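/- Every Borel probability measure ν on S² lying in the closure, in the topology of weak convergence, of the set of barycentered probability measures is either itself barycentered or of the form ν = (1/2)δ_a + (1/2)δ_{−a} for some a ∈ S². -/

import Mathlib

noncomputable section

open MeasureTheory Filter Topology
open scoped ENNReal RealInnerProductSpace

/-- Euclidean 3-space. -/
abbrev E3 : Type := EuclideanSpace ℝ (Fin 3)

/-- The unit sphere `S²` in `ℝ³`. -/
abbrev S2 : Type := Metric.sphere (0 : E3) 1

/-- A Borel probability measure on the sphere is *barycentered* if every atom has mass
less than `1/2` and its Euclidean center of mass is the origin (equivalently, by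
Douady–Earle, its conformal barycenter is the origin). -/
def IsBarycentered (μ : ProbabilityMeasure S2) : Prop :=
  (∀ x : S2, (μ : Measure S2) {x} < 1 / 2) ∧
    (∫ x : S2, (x : E3) ∂(μ : Measure S2)) = 0

/-- The antipode `-x` of a point `x ∈ S²`. -/
def antipode (x : S2) : S2 :=
  ⟨-(x : E3), by
    rw [mem_sphere_zero_iff_norm, norm_neg]
    exact mem_sphere_zero_iff_norm.mp x.2⟩

lemma norm_coe_S2 (x : S2) : ‖(x : E3)‖ = 1 := mem_sphere_zero_iff_norm.mp x.2

lemma integrable_val (μ : Measure S2) [IsFiniteMeasure μ] :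
    Integrable (fun x : S2 => (x : E3)) μ :=
  (BoundedContinuousFunction.mkOfCompact ⟨fun x : S2 => (x : E3),
    continuous_subtype_val⟩).integrable μ

lemma integrable_inner_val (a : E3) (μ : Measure S2) [IsFiniteMeasure μ] :
    Integrable (fun x : S2 => ⟪a, (x : E3)⟫) μ :=
  (BoundedContinuousFunction.mkOfCompact ⟨fun x : S2 => ⟪a, (x : E3)⟫,
    continuous_const.inner continuous_subtype_val⟩).integrable μ

/-- The center of mass of any measure in the closure of barycentered measures vanishes. -/
lemma center_of_mem_closure (ν : ProbabilityMeasure S2)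
    (hν : ν ∈ closure {μ : ProbabilityMeasure S2 | IsBarycentered μ}) :
    (∫ x : S2, (x : E3) ∂(ν : Measure S2)) = 0 := by
  refine integral_eq_zero_of_forall_integral_inner_eq_zero ℝ _ (integrable_val _) ?_
  intro c
  set f : BoundedContinuousFunction S2 ℝ := BoundedContinuousFunction.mkOfCompact ⟨fun x : S2 => ⟪c, (x : E3)⟫,
    continuous_const.inner continuous_subtype_val⟩ with hf
  have hcl : IsClosed {μ : ProbabilityMeasure S2 | ∫ x, f x ∂(μ : Measure S2) = 0} :=
    isClosed_eq (ProbabilityMeasure.continuous_integral_boundedContinuousFunction f)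
      continuous_const
  have hsub : {μ : ProbabilityMeasure S2 | IsBarycentered μ} ⊆
      {μ : ProbabilityMeasure S2 | ∫ x, f x ∂(μ : Measure S2) = 0} := by
    intro μ hμ
    have : ∫ x : S2, ⟪c, (x : E3)⟫ ∂(μ : Measure S2)
        = ⟪c, ∫ x : S2, (x : E3) ∂(μ : Measure S2)⟫ :=
      integral_inner (integrable_val _) c
    simp only [Set.mem_setOf_eq]
    calc ∫ x, f x ∂(μ : Measure S2)
        = ∫ x : S2, ⟪c, (x : E3)⟫ ∂(μ : Measure S2) := rfl
      _ = ⟪c, ∫ x : S2, (x : E3) ∂(μ : Measure S2)⟫ := this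
      _ = 0 := by rw [hμ.2, inner_zero_right]
  exact closure_minimal hsub hcl hν

/-- Every probability measure in the weak closure of the set of barycentered probability
measures on `S²` is either itself barycentered or equal to `(1/2) δ_a + (1/2) δ_{-a}`
for some `a ∈ S²`. -/
theorem mem_closure_barycentered
    (ν : ProbabilityMeasure S2)
    (hν : ν ∈ closure {μ : ProbabilityMeasure S2 | IsBarycentered μ}) :
    IsBarycentered ν ∨ ∃ a : S2,
      (ν : Measure S2) =
        (1 / 2 : ℝ≥0∞) • Measure.dirac a + (1 / 2 : ℝ≥0∞) • Measure.dirac (antipode a) := by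
  have hbar : (∫ x : S2, (x : E3) ∂(ν : Measure S2)) = 0 := center_of_mem_closure ν hν
  by_cases hatom : ∀ x : S2, (ν : Measure S2) {x} < 1 / 2
  · exact Or.inl ⟨hatom, hbar⟩
  right
  push_neg at hatom
  obtain ⟨a, ha⟩ := hatom
  refine ⟨a, ?_⟩
  set μ : Measure S2 := (ν : Measure S2) with hμdef
  set b : S2 := antipode a with hbdef
  have hab : a ≠ b := by
    intro h
    have : (a : E3) = -(a : E3) := congrArg Subtype.val h
    have h0 : (a : E3) = 0 := by
      have h2 : (a : E3) + (a : E3) = 0 := by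
        nth_rewrite 2 [this]
        exact add_neg_cancel _
      have h3 : (2 : ℝ) • (a : E3) = 0 := by rw [two_smul]; exact h2
      rcases smul_eq_zero.mp h3 with h | h
      · norm_num at h
      · exact h
    have := norm_coe_S2 a
    rw [h0, norm_zero] at this
    norm_num at this
  -- real masses
  set m : ℝ := (μ {a}).toReal with hmdef
  set t : ℝ := (μ {a}ᶜ).toReal with htdef
  have hμa_ne : μ {a} ≠ ∞ := measure_ne_top _ _
  have hμac_ne : μ {a}ᶜ ≠ ∞ := measure_ne_top _ _
  have hmt : m + t = 1 := by
    have h := measure_add_measure_compl (μ := μ) (measurableSet_singleton a)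
    have : (μ {a} + μ {a}ᶜ).toReal = (μ Set.univ).toReal := by rw [h]
    rwa [ENNReal.toReal_add hμa_ne hμac_ne, measure_univ, ENNReal.toReal_one] at this
  have hm_half : (1 : ℝ) / 2 ≤ m := by
    have : ((1 : ℝ≥0∞) / 2).toReal ≤ (μ {a}).toReal :=
      ENNReal.toReal_mono hμa_ne ha
    simpa using this
  -- integral of ⟪a, ·⟫ vanishes
  have h0 : ∫ x : S2, ⟪(a : E3), (x : E3)⟫ ∂μ = 0 := by
    rw [integral_inner (integrable_val _), hbar, inner_zero_right]
  have hinta : ⟪(a : E3), (a : E3)⟫ = (1 : ℝ) := by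
    rw [real_inner_self_eq_norm_sq, norm_coe_S2]; norm_num
  -- integral over {a}
  have hIa : ∫ x in {a}, ⟪(a : E3), (x : E3)⟫ ∂μ = m := by
    have hcongr : ∫ x in {a}, ⟪(a : E3), (x : E3)⟫ ∂μ = ∫ _ in {a}, (1 : ℝ) ∂μ := by
      refine setIntegral_congr_fun (measurableSet_singleton a) ?_
      intro x hx
      rw [Set.mem_singleton_iff] at hx
      rw [hx]; exact hinta
    rw [hcongr, setIntegral_const, smul_eq_mul, mul_one]
    exact rfl
  have hsplit := integral_add_compl (measurableSet_singleton a)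
    (integrable_inner_val (a : E3) μ)
  have hIc : ∫ x in {a}ᶜ, ⟪(a : E3), (x : E3)⟫ ∂μ = -m := by
    have : m + ∫ x in {a}ᶜ, ⟪(a : E3), (x : E3)⟫ ∂μ = 0 := by rw [← hIa, hsplit, h0]
    linarith
  -- pointwise bound
  have hbound : ∀ x : S2, -1 ≤ ⟪(a : E3), (x : E3)⟫ := by
    intro x
    have := abs_real_inner_le_norm (a : E3) (x : E3)
    rw [norm_coe_S2, norm_coe_S2, one_mul] at this
    linarith [neg_abs_le (⟪(a : E3), (x : E3)⟫)]
  have hlow : -t ≤ ∫ x in {a}ᶜ, ⟪(a : E3), (x : E3)⟫ ∂μ := by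
    have hconst : ∫ _ in {a}ᶜ, (-1 : ℝ) ∂μ = -t := by
      rw [setIntegral_const, smul_eq_mul, mul_neg_one]; exact rfl
    rw [← hconst]
    exact setIntegral_mono_on (integrable_const _).integrableOn
      (integrable_inner_val (a : E3) μ).integrableOn
      (measurableSet_singleton a).compl (fun x _ => hbound x)
  have hm : m = 1 / 2 := by rw [hIc] at hlow; linarith
  have ht : t = 1 / 2 := by linarith
  -- the integrand is a.e. equal to -1 on {a}ᶜ
  have hzero : ∫ x in {a}ᶜ, ((1 : ℝ) + ⟪(a : E3), (x : E3)⟫) ∂μ = 0 := by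
    rw [integral_add (integrable_const _).integrableOn
      (integrable_inner_val (a : E3) μ).integrableOn, hIc, setIntegral_const, smul_eq_mul]
    change t * 1 + -m = 0
    rw [hm, ht]; ring
  have hae : (fun x : S2 => (1 : ℝ) + ⟪(a : E3), (x : E3)⟫) =ᵐ[μ.restrict {a}ᶜ] 0 := by
    refine (setIntegral_eq_zero_iff_of_nonneg_ae ?_ ?_).mp hzero
    · refine Eventually.of_forall (fun x => ?_)
      have := hbound x
      show (0 : ℝ) ≤ 1 + ⟪(a : E3), (x : E3)⟫
      linarith
    · exact ((integrable_const _).integrableOn.add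
        (integrable_inner_val (a : E3) μ).integrableOn)
  have haeb : ∀ᵐ x ∂(μ.restrict {a}ᶜ), x = b := by
    filter_upwards [hae] with x hx
    have hx1 : ⟪(a : E3), (x : E3)⟫ = -1 := by
      have : (1 : ℝ) + ⟪(a : E3), (x : E3)⟫ = 0 := hx
      linarith
    have hnorm : ‖(x : E3) + (a : E3)‖ ^ 2 = 0 := by
      rw [norm_add_sq_real, norm_coe_S2, norm_coe_S2, real_inner_comm, hx1]; ring
    have : (x : E3) + (a : E3) = 0 := by
      have := pow_eq_zero_iff (n := 2) (by norm_num) |>.mp hnorm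
      exact norm_eq_zero.mp this
    have hxe : (x : E3) = -(a : E3) := eq_neg_of_add_eq_zero_left this
    exact Subtype.ext hxe
  have hnull : μ ({b}ᶜ ∩ {a}ᶜ) = 0 := by
    have := ae_iff.mp haeb
    rwa [Measure.restrict_apply (by
      exact (measurableSet_singleton b).compl)] at this
  -- the ℝ≥0∞ masses
  have hμa : μ {a} = 1 / 2 := by
    refine (ENNReal.toReal_eq_toReal_iff' hμa_ne (by norm_num)).mp ?_
    rw [← hmdef, hm]
    norm_num
  have hμb : μ {b} = 1 / 2 := by
    have hsplit2 : μ {a}ᶜ = μ ({b} ∩ {a}ᶜ) + μ ({b}ᶜ ∩ {a}ᶜ) := by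
      rw [← measure_inter_add_diff {a}ᶜ (measurableSet_singleton b)]
      congr 1
      · rw [Set.inter_comm]
      · rw [Set.diff_eq, Set.inter_comm]
    have hba : {b} ∩ {a}ᶜ = ({b} : Set S2) := by
      rw [Set.inter_eq_left, Set.singleton_subset_iff]
      simp only [Set.mem_compl_iff, Set.mem_singleton_iff]
      exact fun h => hab h.symm
    have hμac : μ {a}ᶜ = 1 / 2 := by
      rw [prob_compl_eq_one_sub (measurableSet_singleton a), hμa]
      exact ENNReal.sub_eq_of_eq_add (by norm_num) (ENNReal.add_halves 1).symm
    rw [hsplit2, hba, hnull, add_zero] at hμac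
    exact hμac
  -- conclude by extensionality
  ext s hs
  have hdecomp : μ s = μ (s ∩ {a}) + μ (s ∩ {b}) := by
    have h1 : μ s = μ (s ∩ ({a} ∪ {b})) + μ (s \ ({a} ∪ {b})) := by
      rw [← measure_inter_add_diff s ((measurableSet_singleton a).union
        (measurableSet_singleton b))]
    have h2 : μ (s \ ({a} ∪ {b})) = 0 := by
      refine measure_mono_null ?_ hnull
      intro x hx
      rcases hx with ⟨_, hxc⟩
      rw [Set.mem_union] at hxc
      push_neg at hxc
      exact ⟨hxc.2, hxc.1⟩
    have h3 : s ∩ ({a} ∪ {b}) = (s ∩ {a}) ∪ (s ∩ {b}) := Set.inter_union_distrib_left s _ _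
    have h4 : μ ((s ∩ {a}) ∪ (s ∩ {b})) = μ (s ∩ {a}) + μ (s ∩ {b}) := by
      refine measure_union ?_ (hs.inter (measurableSet_singleton b))
      refine Set.disjoint_left.mpr ?_
      rintro x ⟨_, hx1⟩ ⟨_, hx2⟩
      rw [Set.mem_singleton_iff] at hx1 hx2
      exact hab (hx1 ▸ hx2 ▸ rfl)
    rw [h1, h2, add_zero, h3, h4]
  have hmem : ∀ c : S2, c ∈ s → s ∩ {c} = {c} := by
    intro c hc
    rw [Set.inter_eq_right]
    intro x hx
    rwa [Set.mem_singleton_iff.mp hx]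
  have hnot : ∀ c : S2, c ∉ s → s ∩ {c} = ∅ := by
    intro c hc
    ext x
    simp only [Set.mem_inter_iff, Set.mem_singleton_iff, Set.mem_empty_iff_false, iff_false,
      not_and]
    rintro hxs rfl
    exact hc hxs
  rw [Measure.add_apply, Measure.smul_apply, Measure.smul_apply,
    Measure.dirac_apply' _ hs, Measure.dirac_apply' _ hs, hdecomp]
  by_cases h1 : a ∈ s <;> by_cases h2 : b ∈ s
  · rw [hmem a h1, hmem b h2, hμa, hμb, Set.indicator_of_mem h1, Set.indicator_of_mem h2]
    simp [smul_eq_mul]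
  · rw [hmem a h1, hnot b h2, hμa, measure_empty, Set.indicator_of_mem h1,
      Set.indicator_of_notMem h2]
    simp [smul_eq_mul]
  · rw [hnot a h1, hmem b h2, hμb, measure_empty, Set.indicator_of_notMem h1,
      Set.indicator_of_mem h2]
    simp [smul_eq_mul]
  · rw [hnot a h1, hnot b h2, measure_empty, Set.indicator_of_notMem h1,
      Set.indicator_of_notMem h2]
    simp
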